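/- In the single-individual setting with strict preferences: if P' ≠ P̄ is a monotonic transformation of P̄ at x_{N-1}, then x(P') is weakly P'-preferred to x_{N-1}. Likewise, if P' ≠ P̄ is a monotonic transformation of P̄ at x_N, then x(P') is weakly P'-preferred to x_N. -/
import Mathlib


/-- A strict linear order (strict total order) on `X`. -/
def SLO {X : Type} (P : X → X → Prop) : Prop :=
  (∀ x y : X, x ≠ y → P x y ∨ P y x) ∧ Transitive P ∧ Irreflexive P

/-- The reference ranking `P̄`: `x_1 P̄ x_2 P̄ … P̄ x_N` (0-indexed: smaller index preferred). -/
def Pbar {N : ℕ} : Fin N → Fin N → Prop := fun a b => a < b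

/-- The rank of `x` under `P`: the number of outcomes strictly preferred to `x`. -/
noncomputable def rankOf {N : ℕ} (P : Fin N → Fin N → Prop) (x : Fin N) : ℕ :=
  Nat.card {y : Fin N // P y x}

/-- `x` strictly improves its rank under `P` relative to `P̄`. -/
def improves {N : ℕ} (P : Fin N → Fin N → Prop) (x : Fin N) : Prop :=
  rankOf P x < rankOf (Pbar (N := N)) x

/-- `z` is `x(P)`: the `P`-most-preferred outcome among those whose rank improved. -/
def topImproved {N : ℕ} (P : Fin N → Fin N → Prop) (z : Fin N) : Prop :=
  improves P z ∧ ∀ w : Fin N, improves P w → ¬ P w z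

lemma rank_eq {N : ℕ} (P : Fin N → Fin N → Prop) (x : Fin N) :
    rankOf P x = {y : Fin N | P y x}.ncard := rfl

lemma rankPbar {N : ℕ} (x : Fin N) : rankOf (Pbar (N := N)) x = x.val := by
  rw [rank_eq]
  have h1 : {y : Fin N | Pbar y x} = ↑(Finset.Iio x) := by
    ext y; simp [Pbar]
  rw [h1, Set.ncard_coe_finset, Fin.card_Iio]

lemma asym {X : Type} {P : X → X → Prop} (hP : SLO P) {x y : X} (h : P x y) : ¬ P y x :=
  fun h' => hP.2.2 x (hP.2.1 h h')

lemma ncard_compl {N : ℕ} (s : Set (Fin N)) :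
    (Set.univ \ s).ncard = N - s.ncard := by
  rw [Set.ncard_diff (Set.subset_univ s) (Set.toFinite s), Set.ncard_univ,
    Nat.card_eq_fintype_card, Fintype.card_fin]

/-- if `P' ≠ P̄` is a monotonic transformation of `P̄` at `x_{N-1}`
(resp. at `x_N`), then `x(P')` is weakly `P'`-preferred to `x_{N-1}` (resp. `x_N`). -/
theorem stmt11 {N : ℕ} (hN : 3 ≤ N) (P' : Fin N → Fin N → Prop) (hP' : SLO P')
    (hne : P' ≠ Pbar) (z : Fin N) (hz : topImproved P' z) :
    ((∀ y : Fin N, Pbar (⟨N - 2, by omega⟩ : Fin N) y → P' (⟨N - 2, by omega⟩ : Fin N) y) →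
      (z = (⟨N - 2, by omega⟩ : Fin N) ∨ P' z (⟨N - 2, by omega⟩ : Fin N))) ∧
    ((∀ y : Fin N, Pbar (⟨N - 1, by omega⟩ : Fin N) y → P' (⟨N - 1, by omega⟩ : Fin N) y) →
      (z = (⟨N - 1, by omega⟩ : Fin N) ∨ P' z (⟨N - 1, by omega⟩ : Fin N))) := by
  set a2 : Fin N := ⟨N - 2, by omega⟩ with ha2
  set a1 : Fin N := ⟨N - 1, by omega⟩ with ha1
  have hv2 : (a2 : ℕ) = N - 2 := rfl
  have hv1 : (a1 : ℕ) = N - 1 := rfl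
  have h21 : a2 ≠ a1 := by
    intro h; apply_fun Fin.val at h; rw [hv2, hv1] at h; omega
  constructor
  · -- at x_{N-1}, i.e. index N-2
    intro h
    by_contra hc
    push_neg at hc
    obtain ⟨hz2, hnP⟩ := hc
    have haz : P' a2 z := (hP'.1 a2 z (fun e => hz2 e.symm)).resolve_right hnP
    have hnimp : ¬ improves P' a2 := fun him => hz.2 a2 him haz
    have hge : N - 2 ≤ rankOf P' a2 := by
      by_contra hlt
      exact hnimp (by unfold improves; rw [rankPbar, hv2]; omega)
    have ha21 : P' a2 a1 := by
      apply h a1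
      show a2 < a1
      rw [Fin.lt_def, hv2, hv1]; omega
    by_cases hz1 : z = a1
    · -- z = a1 : everyone except z beats z, contradicting improves z
      have hsub : {y : Fin N | P' y a2} ⊆ Set.univ \ {a2, z} := by
        intro y hy
        simp only [Set.mem_diff, Set.mem_univ, Set.mem_insert_iff, Set.mem_singleton_iff,
          true_and]
        push_neg
        constructor
        · rintro rfl; exact hP'.2.2 _ hy
        · rintro rfl; exact asym hP' haz hy
      have heq : {y : Fin N | P' y a2} = Set.univ \ {a2, z} := by
        apply Set.eq_of_subset_of_ncard_le hsub _ (Set.toFinite _)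
        rw [ncard_compl, Set.ncard_pair hz2.symm, ← rank_eq]
        omega
      have hall : ∀ y : Fin N, y ≠ z → P' y z := by
        intro y hy
        by_cases hy2 : y = a2
        · rw [hy2]; exact haz
        · have hmem : y ∈ {y : Fin N | P' y a2} := by
            rw [heq]; simp only [Set.mem_diff, Set.mem_univ, Set.mem_insert_iff,
              Set.mem_singleton_iff, true_and]
            push_neg; exact ⟨hy2, hy⟩
          exact hP'.2.1 hmem haz
      have hsub2 : Set.univ \ {z} ⊆ {y : Fin N | P' y z} := by
        intro y hy
        simp only [Set.mem_diff, Set.mem_univ, Set.mem_singleton_iff, true_and] at hy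
        exact hall y hy
      have hge2 : N - 1 ≤ rankOf P' z := by
        rw [rank_eq]
        calc N - 1 = (Set.univ \ {z} : Set (Fin N)).ncard := by
              rw [ncard_compl, Set.ncard_singleton]
          _ ≤ _ := Set.ncard_le_ncard hsub2 (Set.toFinite _)
      have himpz := hz.1
      unfold improves at himpz
      have hzval : (z : ℕ) = N - 1 := by rw [hz1]
      rw [rankPbar, hzval] at himpz
      omega
    · -- z ≠ a1: three excluded elements
      have hsub : {y : Fin N | P' y a2} ⊆ Set.univ \ {a2, z, a1} := by
        intro y hy
        simp only [Set.mem_diff, Set.mem_univ, Set.mem_insert_iff, Set.mem_singleton_iff,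
          true_and]
        push_neg
        refine ⟨?_, ?_, ?_⟩
        · rintro rfl; exact hP'.2.2 _ hy
        · rintro rfl; exact asym hP' haz hy
        · rintro rfl; exact asym hP' ha21 hy
      have hc3 : ({a2, z, a1} : Set (Fin N)).ncard = 3 := by
        rw [Set.ncard_insert_of_notMem (by
          simp only [Set.mem_insert_iff, Set.mem_singleton_iff]
          push_neg; exact ⟨fun e => hz2 e.symm, h21⟩) (Set.toFinite _), Set.ncard_pair hz1]
      have hle : rankOf P' a2 ≤ N - 3 := by
        rw [rank_eq]
        calc {y : Fin N | P' y a2}.ncard ≤ (Set.univ \ {a2, z, a1} : Set (Fin N)).ncard :=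
              Set.ncard_le_ncard hsub (Set.toFinite _)
          _ = N - 3 := by rw [ncard_compl, hc3]
      omega
  · -- at x_N, i.e. index N-1
    intro _
    by_contra hc
    push_neg at hc
    obtain ⟨hz1, hnP⟩ := hc
    have haz : P' a1 z := (hP'.1 a1 z (fun e => hz1 e.symm)).resolve_right hnP
    have hnimp : ¬ improves P' a1 := fun him => hz.2 a1 him haz
    have hge : N - 1 ≤ rankOf P' a1 := by
      by_contra hlt
      exact hnimp (by unfold improves; rw [rankPbar, hv1]; omega)
    have hsub : {y : Fin N | P' y a1} ⊆ Set.univ \ {a1, z} := by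
      intro y hy
      simp only [Set.mem_diff, Set.mem_univ, Set.mem_insert_iff, Set.mem_singleton_iff, true_and]
      push_neg
      constructor
      · rintro rfl; exact hP'.2.2 _ hy
      · rintro rfl; exact asym hP' haz hy
    have hle : rankOf P' a1 ≤ N - 2 := by
      rw [rank_eq]
      calc {y : Fin N | P' y a1}.ncard ≤ (Set.univ \ {a1, z} : Set (Fin N)).ncard :=
            Set.ncard_le_ncard hsub (Set.toFinite _)
        _ = N - 2 := by rw [ncard_compl, Set.ncard_pair hz1.symm]
    omega
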